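/- Let M and N be von Neumann algebras acting on a Hilbert space H with M ⊆_γ N and N ⊆_γ M. Let ζ ∈ H be a unit vector, let p ∈ M′ be the projection onto the closure of Mζ and q ∈ N′ the projection onto the closure of Nζ. Then for every x in the unit ball of M, ‖(px)(pqp) − (pqp)(px)‖ ≤ 2γ; that is, the derivation ad(pqp) restricted to Mp has norm at most 2γ. -/

import Mathlib

noncomputable section

variable {H : Type*} [NormedAddCommGroup H] [InnerProductSpace ℂ H] [CompleteSpace H]

/-- The near inclusion `M ⊆_γ N`: every `x ∈ M` admits `y ∈ N` with `‖x - y‖ ≤ γ‖x‖`. -/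
def NearIncl (M N : Set (H →L[ℂ] H)) (γ : ℝ) : Prop :=
  ∀ x ∈ M, ∃ y ∈ N, ‖x - y‖ ≤ γ * ‖x‖

/-- A von Neumann algebra is a factor if its center consists of scalars. -/
def IsFactor (M : VonNeumannAlgebra H) : Prop :=
  ∀ x ∈ M, (∀ y ∈ M, x * y = y * x) → ∃ c : ℂ, x = c • (1 : H →L[ℂ] H)

/-- A von Neumann algebra is diffuse if it has no minimal projections. -/
def IsDiffuse (M : VonNeumannAlgebra H) : Prop :=
  ∀ p : H →L[ℂ] H, p ∈ M → IsSelfAdjoint p → IsIdempotentElem p → p ≠ 0 →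
    ∃ q : H →L[ℂ] H, q ∈ M ∧ IsSelfAdjoint q ∧ IsIdempotentElem q ∧
      q * p = q ∧ p * q = q ∧ q ≠ 0 ∧ q ≠ p

/-- `τ` is a faithful tracial state on the von Neumann algebra `M`. -/
def IsTracialState (M : VonNeumannAlgebra H) (τ : (H →L[ℂ] H) →ₗ[ℂ] ℂ) : Prop :=
  τ 1 = 1 ∧ (∀ x ∈ M, 0 ≤ (τ (star x * x)).re ∧ (τ (star x * x)).im = 0) ∧
    (∀ x ∈ M, ∀ y ∈ M, τ (x * y) = τ (y * x)) ∧
    (∀ x ∈ M, τ (star x * x) = 0 → x = 0)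

/-- `M` is a II₁ factor with (unique) tracial state `τ`: an infinite-dimensional
(diffuse) finite factor. -/
def IsIIOneFactor (M : VonNeumannAlgebra H) (τ : (H →L[ℂ] H) →ₗ[ℂ] ℂ) : Prop :=
  IsFactor M ∧ IsDiffuse M ∧ IsTracialState M τ

/-- The orthogonal projection of `H` onto the closed subspace generated by `S`. -/
def projCl (S : Set H) : H →L[ℂ] H :=
  letI K := (Submodule.span ℂ S).topologicalClosure
  haveI : CompleteSpace K := (Submodule.isClosed_topologicalClosure _).completeSpace_coe
  K.subtypeL ∘L K.orthogonalProjectionOnto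

open ContinuousLinearMap in
lemma projCl_norm_le_aux (S : Set H) : ‖projCl S‖ ≤ 1 := by
  haveI : CompleteSpace ((Submodule.span ℂ S).topologicalClosure) :=
    (Submodule.isClosed_topologicalClosure _).completeSpace_coe
  refine opNorm_le_bound _ zero_le_one fun v => ?_
  show ‖((Submodule.span ℂ S).topologicalClosure.orthogonalProjectionOnto v : H)‖ ≤ 1 * ‖v‖
  rw [one_mul]
  exact ((Submodule.span ℂ S).topologicalClosure.orthogonalProjectionOnto).le_opNorm v |>.trans
    (by nlinarith [Submodule.orthogonalProjectionOnto_norm_le (Submodule.span ℂ S).topologicalClosure,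
      norm_nonneg v])

open ContinuousLinearMap in
lemma projCl_idem_aux (S : Set H) : projCl S * projCl S = projCl S := by
  haveI : CompleteSpace ((Submodule.span ℂ S).topologicalClosure) :=
    (Submodule.isClosed_topologicalClosure _).completeSpace_coe
  ext v
  set K := (Submodule.span ℂ S).topologicalClosure
  show (K.orthogonalProjectionOnto ((K.orthogonalProjectionOnto v : H)) : H)
      = (K.orthogonalProjectionOnto v : H)
  exact Submodule.starProjection_eq_self_iff.mpr (K.orthogonalProjectionOnto v).2

open ContinuousLinearMap in
lemma projCl_comm_aux (S : Set H) (T : H →L[ℂ] H)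
    (hT : ∀ v ∈ S, T v ∈ Submodule.span ℂ S)
    (hT' : ∀ v ∈ S, (ContinuousLinearMap.adjoint T) v ∈ Submodule.span ℂ S) :
    T * projCl S = projCl S * T := by
  haveI : CompleteSpace ((Submodule.span ℂ S).topologicalClosure) :=
    (Submodule.isClosed_topologicalClosure _).completeSpace_coe
  set K0 := Submodule.span ℂ S with hK0
  set K := K0.topologicalClosure with hK
  have hspan : ∀ (U : H →L[ℂ] H), (∀ v ∈ S, U v ∈ K0) → ∀ v ∈ K0, U v ∈ K0 := by
    intro U hU v hv
    induction hv using Submodule.span_induction with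
    | mem w hw => exact hU w hw
    | zero => simp
    | add a b _ _ ha hb => simpa using Submodule.add_mem K0 ha hb
    | smul c a _ ha => simpa using Submodule.smul_mem K0 c ha
  have hcl : ∀ (U : H →L[ℂ] H), (∀ v ∈ S, U v ∈ K0) → ∀ v ∈ K, U v ∈ K := by
    intro U hU v hv
    have h1 : Set.MapsTo U (K0 : Set H) (K0 : Set H) := fun a ha => hspan U hU a ha
    exact h1.closure U.continuous hv
  have hTK : ∀ v ∈ K, T v ∈ K := hcl T hT
  have hTK' : ∀ v ∈ K, (ContinuousLinearMap.adjoint T) v ∈ K := hcl _ hT'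
  have hTperp : ∀ w ∈ Kᗮ, T w ∈ Kᗮ := by
    intro w hw
    rw [Submodule.mem_orthogonal] at hw ⊢
    intro u hu
    rw [← ContinuousLinearMap.adjoint_inner_left]
    exact hw _ (hTK' u hu)
  ext v
  show T (K.orthogonalProjectionOnto v : H) = (K.orthogonalProjectionOnto (T v) : H)
  have h2 : (K.orthogonalProjectionOnto (T (v - K.orthogonalProjectionOnto v)) : H) = 0 := by
    rw [Submodule.orthogonalProjectionOnto_apply_of_mem_orthogonal
      (hTperp (v - K.orthogonalProjectionOnto v) (Submodule.sub_starProjection_mem_orthogonal v))]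
    rfl
  have h3 : T v = T (K.orthogonalProjectionOnto v : H) + T (v - K.orthogonalProjectionOnto v) := by
    rw [← map_add]; congr 1; abel
  rw [h3, map_add, Submodule.coe_add, h2, add_zero,
    (show (K.orthogonalProjectionOnto (T (K.orthogonalProjectionOnto v : H)) : H)
      = T (K.orthogonalProjectionOnto v : H) from
      Submodule.starProjection_eq_self_iff.mpr (hTK _ (K.orthogonalProjectionOnto v).2))]

lemma comm_identity_aux (p q x y : H →L[ℂ] H) (hpx : p * x = x * p) (hqy : q * y = y * q)
    (hpp : p * p = p) :
    (p*x)*(p*q*p) - (p*q*p)*(p*x) = p*(x-y)*(q*p) + (p*q)*((y-x)*p) := by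
  have s1 : ∀ A : H →L[ℂ] H, x*(p*A) = p*(x*A) := fun A => by
    rw [← mul_assoc, ← hpx, mul_assoc]
  have s2 : ∀ A : H →L[ℂ] H, p*(p*A) = p*A := fun A => by rw [← mul_assoc, hpp]
  have s3 : ∀ A : H →L[ℂ] H, y*(q*A) = q*(y*A) := fun A => by
    rw [← mul_assoc, ← hqy, mul_assoc]
  have s4 : p*(x*p) = x*p := by rw [← mul_assoc, hpx, mul_assoc, hpp]
  simp only [mul_sub, sub_mul, mul_assoc, s1, s2, s3, hpx, s4]
  abel

lemma vna_comm_projCl_aux (M : VonNeumannAlgebra H) (ζ : H) (z : H →L[ℂ] H) (hz : z ∈ M) :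
    z * projCl {y : H | ∃ x ∈ M, x ζ = y} = projCl {y : H | ∃ x ∈ M, x ζ = y} * z := by
  refine projCl_comm_aux _ z ?_ ?_
  · rintro v ⟨m, hm, rfl⟩
    exact Submodule.subset_span ⟨z * m, mul_mem hz hm, rfl⟩
  · rintro v ⟨m, hm, rfl⟩
    refine Submodule.subset_span ⟨star z * m, mul_mem (star_mem hz) hm, ?_⟩
    show (star z * m) ζ = (ContinuousLinearMap.adjoint z) (m ζ)
    rw [ContinuousLinearMap.mul_apply, ContinuousLinearMap.star_eq_adjoint]

/-- with `p`, `q` the projections onto the closures of `Mζ`, `Nζ`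
respectively, the derivation `ad(pqp)` restricted to `Mp` has norm at most `2γ`. -/
theorem stmt_15 (M N : VonNeumannAlgebra H) (γ : ℝ)
    (h1 : NearIncl (M : Set (H →L[ℂ] H)) (N : Set (H →L[ℂ] H)) γ)
    (h2 : NearIncl (N : Set (H →L[ℂ] H)) (M : Set (H →L[ℂ] H)) γ)
    (ζ : H) (hζ : ‖ζ‖ = 1) :
    ∀ p q : H →L[ℂ] H,
      p = projCl {y : H | ∃ x ∈ M, x ζ = y} →
      q = projCl {y : H | ∃ x ∈ N, x ζ = y} →
      ∀ x ∈ M, ‖x‖ ≤ 1 →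
        ‖(p * x) * (p * q * p) - (p * q * p) * (p * x)‖ ≤ 2 * γ := by
  intro p q hp hq x hxM hx1
  haveI : Nontrivial H :=
    nontrivial_of_ne ζ 0 (by intro h; rw [h, norm_zero] at hζ; linarith)
  -- γ is nonnegative
  have hγ : 0 ≤ γ := by
    obtain ⟨y1, _, hy1⟩ := h1 1 (one_mem M)
    have h0 : (0:ℝ) ≤ ‖(1 : H →L[ℂ] H) - y1‖ := norm_nonneg _
    rw [norm_one, mul_one] at hy1
    linarith
  -- basic facts about p and q
  have hpp : p * p = p := by rw [hp]; exact projCl_idem_aux _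
  have hpn : ‖p‖ ≤ 1 := by rw [hp]; exact projCl_norm_le_aux _
  have hqn : ‖q‖ ≤ 1 := by rw [hq]; exact projCl_norm_le_aux _
  have hpx : p * x = x * p := by rw [hp]; exact (vna_comm_projCl_aux M ζ x hxM).symm
  obtain ⟨y, hyN, hxy⟩ := h1 x hxM
  have hqy : q * y = y * q := by rw [hq]; exact (vna_comm_projCl_aux N ζ y hyN).symm
  have hxyγ : ‖x - y‖ ≤ γ := hxy.trans (by nlinarith)
  -- the key algebraic identity
  rw [comm_identity_aux p q x y hpx hqy hpp]
  -- norm estimates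
  have hqp : ‖q * p‖ ≤ 1 := (norm_mul_le q p).trans (by nlinarith [norm_nonneg q, norm_nonneg p])
  have hpq : ‖p * q‖ ≤ 1 := (norm_mul_le p q).trans (by nlinarith [norm_nonneg q, norm_nonneg p])
  have hpxy : ‖p * (x - y)‖ ≤ γ := (norm_mul_le p (x - y)).trans
    (by nlinarith [norm_nonneg (x - y), norm_nonneg p])
  have hyxp : ‖(y - x) * p‖ ≤ γ := (norm_mul_le (y - x) p).trans
    (by rw [norm_sub_rev]; nlinarith [norm_nonneg (x - y), norm_nonneg p])
  have n1 : ‖p * (x - y) * (q * p)‖ ≤ γ := (norm_mul_le _ _).trans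
    (by nlinarith [norm_nonneg (p * (x - y)), norm_nonneg (q * p)])
  have n2 : ‖(p * q) * ((y - x) * p)‖ ≤ γ := (norm_mul_le _ _).trans
    (by nlinarith [norm_nonneg (p * q), norm_nonneg ((y - x) * p)])
  calc ‖p * (x - y) * (q * p) + (p * q) * ((y - x) * p)‖
      ≤ ‖p * (x - y) * (q * p)‖ + ‖(p * q) * ((y - x) * p)‖ := norm_add_le _ _
    _ ≤ 2 * γ := by linarith
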